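/- Let H be a complex Hilbert space, A, B : H → H bounded skew-adjoint operators, u : ℝ → ℝ continuous, and ψ : ℝ → H differentiable with ψ'(t) = A ψ(t) + u(t)·B ψ(t) for all t and ‖ψ(0)‖ = 1. Let φ ∈ H and λ ∈ ℝ satisfy Aφ = iλ·φ. Then for every t ≥ 0, | |⟨φ, ψ(t)⟩| − |⟨φ, ψ(0)⟩| | ≤ ‖Bφ‖ · ∫₀^t |u(s)| ds. -/

import Mathlib

open ContinuousLinearMap MeasureTheory intervalIntegral

theorem control_L1_lower_bound
    {H : Type*} [NormedAddCommGroup H] [InnerProductSpace ℂ H] [CompleteSpace H]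
    (A B : H →L[ℂ] H) (hA : ContinuousLinearMap.adjoint A = -A)
    (hB : ContinuousLinearMap.adjoint B = -B)
    (u : ℝ → ℝ) (hu : Continuous u) (ψ : ℝ → H)
    (hψ : ∀ t : ℝ, HasDerivAt ψ (A (ψ t) + u t • B (ψ t)) t)
    (hψ0 : ‖ψ 0‖ = 1) (φ : H) (lam : ℝ)
    (hφ : A φ = (Complex.I * (lam : ℂ)) • φ) :
    ∀ t : ℝ, 0 ≤ t →
      |‖(inner ℂ φ (ψ t) : ℂ)‖ - ‖(inner ℂ φ (ψ 0) : ℂ)‖|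
        ≤ ‖B φ‖ * ∫ s in (0:ℝ)..t, |u s| := by
  have hψcont : Continuous ψ :=
    continuous_iff_continuousAt.2 fun t => (hψ t).continuousAt
  -- purely imaginary inner ℂ products for skew-adjoint operators
  have skew : ∀ (S : H →L[ℂ] H), ContinuousLinearMap.adjoint S = -S →
      ∀ x : H, (inner ℂ x (S x) : ℂ).re = 0 := by
    intro S hS x
    have h1 : (inner ℂ ((ContinuousLinearMap.adjoint S) x) x : ℂ) = inner ℂ x (S x) :=
      ContinuousLinearMap.adjoint_inner_left S x x
    rw [hS] at h1
    simp only [ContinuousLinearMap.neg_apply, inner_neg_left] at h1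
    have h3 : -((starRingEnd ℂ) (inner ℂ x (S x) : ℂ)) = inner ℂ x (S x) := by
      rw [inner_conj_symm]; exact h1
    have := congrArg Complex.re h3
    simp only [Complex.neg_re, Complex.conj_re] at this
    linarith
  -- norm preservation
  have hnorm : ∀ t : ℝ, ‖ψ t‖ = 1 := by
    intro t
    set r : ℝ → ℝ := fun s => (inner ℂ (ψ s) (ψ s) : ℂ).re with hr_def
    have hr : ∀ s : ℝ, HasDerivAt r 0 s := by
      intro s
      have h := (hψ s).inner ℂ (hψ s)
      have h2 := Complex.reCLM.hasFDerivAt.comp_hasDerivAt s h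
      have key : Complex.reCLM
          ((inner ℂ (ψ s) (A (ψ s) + u s • B (ψ s)) : ℂ)
            + (inner ℂ (A (ψ s) + u s • B (ψ s)) (ψ s) : ℂ)) = 0 := by
        have hc : (inner ℂ (A (ψ s) + u s • B (ψ s)) (ψ s) : ℂ)
            = (starRingEnd ℂ) (inner ℂ (ψ s) (A (ψ s) + u s • B (ψ s)) : ℂ) :=
          (inner_conj_symm _ _).symm
        have hre : (inner ℂ (ψ s) (A (ψ s) + u s • B (ψ s)) : ℂ).re = 0 := by
          rw [inner_add_right, ← Complex.coe_smul, inner_smul_right]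
          have h1 := skew A hA (ψ s)
          have h2 := skew B hB (ψ s)
          simp only [Complex.add_re, Complex.mul_re, Complex.ofReal_re,
            Complex.ofReal_im, h1, h2]
          ring
        simp only [Complex.reCLM_apply, hc, Complex.add_re, Complex.conj_re, hre]
        ring
      rw [key] at h2
      exact h2
    have hconst : r t = r 0 :=
      is_const_of_deriv_eq_zero (fun s => (hr s).differentiableAt)
        (fun s => (hr s).deriv) t 0
    have ht2 : (inner ℂ (ψ t) (ψ t) : ℂ).re = ‖ψ t‖ ^ 2 := by
      simpa using (inner_self_eq_norm_sq (𝕜 := ℂ) (ψ t))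
    have h02 : (inner ℂ (ψ 0) (ψ 0) : ℂ).re = ‖ψ 0‖ ^ 2 := by
      simpa using (inner_self_eq_norm_sq (𝕜 := ℂ) (ψ 0))
    have hconst' : (inner ℂ (ψ t) (ψ t) : ℂ).re = (inner ℂ (ψ 0) (ψ 0) : ℂ).re := hconst
    have : ‖ψ t‖ ^ 2 = 1 := by
      rw [← ht2, hconst', h02, hψ0]; norm_num
    nlinarith [norm_nonneg (ψ t)]
  -- the coordinate g and the rotated coordinate h
  set g : ℝ → ℂ := fun s => (inner ℂ φ (ψ s) : ℂ) with hg_def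
  have hg : ∀ s : ℝ, HasDerivAt g
      (Complex.I * lam * g s + (u s : ℂ) * (inner ℂ φ (B (ψ s)) : ℂ)) s := by
    intro s
    have h := (hasDerivAt_const s φ).inner ℂ (hψ s)
    have key : (inner ℂ φ (A (ψ s) + u s • B (ψ s)) : ℂ) + (inner ℂ (0 : H) (ψ s) : ℂ)
        = Complex.I * lam * g s + (u s : ℂ) * (inner ℂ φ (B (ψ s)) : ℂ) := by
      rw [inner_zero_left, add_zero, inner_add_right, ← Complex.coe_smul, inner_smul_right]
      have hAφ : (inner ℂ φ (A (ψ s)) : ℂ) = Complex.I * lam * g s := by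
        have h1 : (inner ℂ ((ContinuousLinearMap.adjoint A) φ) (ψ s) : ℂ)
            = inner ℂ φ (A (ψ s)) := ContinuousLinearMap.adjoint_inner_left A (ψ s) φ
        rw [hA] at h1
        simp only [ContinuousLinearMap.neg_apply, hφ, inner_neg_left,
          inner_smul_left] at h1
        rw [← h1, hg_def]
        have hconj : (starRingEnd ℂ) (Complex.I * (lam : ℂ)) = -(Complex.I * lam) := by
          simp [Complex.ext_iff]
        rw [hconj]
        ring
      rw [hAφ]
    rw [key] at h
    exact h
  set c : ℂ := -(Complex.I * lam) with hc_def
  set e : ℝ → ℂ := fun s => Complex.exp (c * s) with he_def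
  have he : ∀ s : ℝ, HasDerivAt e (c * e s) s := by
    intro s
    have h1 : HasDerivAt (fun x : ℝ => c * (x : ℂ)) c s := by
      simpa using (Complex.ofRealCLM.hasDerivAt (x := s)).const_mul c
    simpa [he_def, mul_comm] using h1.cexp
  set h : ℝ → ℂ := fun s => e s * g s with hh_def
  have hh : ∀ s : ℝ, HasDerivAt h ((u s : ℂ) * (e s * (inner ℂ φ (B (ψ s)) : ℂ))) s := by
    intro s
    have := (he s).mul (hg s)
    have key : c * e s * g s + e s * (Complex.I * lam * g s
        + (u s : ℂ) * (inner ℂ φ (B (ψ s)) : ℂ))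
        = (u s : ℂ) * (e s * (inner ℂ φ (B (ψ s)) : ℂ)) := by
      rw [hc_def]; ring
    rw [key] at this
    exact this
  have he_norm : ∀ s : ℝ, ‖e s‖ = 1 := by
    intro s
    rw [he_def]
    simp only [Complex.norm_exp]
    have : (c * s).re = 0 := by
      rw [hc_def]
      simp [Complex.ext_iff]
    rw [this, Real.exp_zero]
  have hinner_bound : ∀ s : ℝ, ‖(inner ℂ φ (B (ψ s)) : ℂ)‖ ≤ ‖B φ‖ := by
    intro s
    have h1 : (inner ℂ ((ContinuousLinearMap.adjoint B) φ) (ψ s) : ℂ)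
        = inner ℂ φ (B (ψ s)) := ContinuousLinearMap.adjoint_inner_left B (ψ s) φ
    rw [hB] at h1
    simp only [ContinuousLinearMap.neg_apply, inner_neg_left] at h1
    rw [← h1]
    calc ‖-(inner ℂ (B φ) (ψ s) : ℂ)‖ = ‖(inner ℂ (B φ) (ψ s) : ℂ)‖ := norm_neg _
      _ ≤ ‖B φ‖ * ‖ψ s‖ := norm_inner_le_norm _ _
      _ = ‖B φ‖ := by rw [hnorm s, mul_one]
  -- continuity of the derivative of h
  have hd_cont : Continuous (fun s : ℝ => (u s : ℂ) * (e s * (inner ℂ φ (B (ψ s)) : ℂ))) := by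
    apply Continuous.mul
    · exact Complex.continuous_ofReal.comp hu
    · apply Continuous.mul
      · exact Complex.continuous_exp.comp (continuous_const.mul Complex.continuous_ofReal)
      · exact (innerSL ℂ φ).continuous.comp (B.continuous.comp hψcont)
  intro t ht
  have hftc : (∫ s in (0:ℝ)..t, (u s : ℂ) * (e s * (inner ℂ φ (B (ψ s)) : ℂ)))
      = h t - h 0 :=
    intervalIntegral.integral_eq_sub_of_hasDerivAt (fun s _ => hh s)
      (hd_cont.intervalIntegrable 0 t)
  have step1 : |‖g t‖ - ‖g 0‖| = |‖h t‖ - ‖h 0‖| := by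
    rw [hh_def]
    simp only [norm_mul, he_norm, one_mul]
  have step2 : |‖h t‖ - ‖h 0‖| ≤ ‖h t - h 0‖ := abs_norm_sub_norm_le _ _
  have step3 : ‖h t - h 0‖ ≤ ∫ s in (0:ℝ)..t, ‖B φ‖ * |u s| := by
    rw [← hftc]
    calc ‖∫ s in (0:ℝ)..t, (u s : ℂ) * (e s * (inner ℂ φ (B (ψ s)) : ℂ))‖
        ≤ ∫ s in (0:ℝ)..t, ‖(u s : ℂ) * (e s * (inner ℂ φ (B (ψ s)) : ℂ))‖ :=
          intervalIntegral.norm_integral_le_integral_norm ht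
      _ ≤ ∫ s in (0:ℝ)..t, ‖B φ‖ * |u s| := by
          apply intervalIntegral.integral_mono_on ht
          · exact (hd_cont.norm.intervalIntegrable 0 t)
          · exact ((continuous_const.mul hu.abs).intervalIntegrable 0 t)
          · intro s _
            rw [norm_mul, norm_mul, he_norm, one_mul]
            have : ‖((u s : ℂ))‖ = |u s| := by simp [Complex.norm_real]
            rw [this, mul_comm (‖B φ‖)]
            exact mul_le_mul_of_nonneg_left (hinner_bound s) (abs_nonneg _)
  have step4 : (∫ s in (0:ℝ)..t, ‖B φ‖ * |u s|) = ‖B φ‖ * ∫ s in (0:ℝ)..t, |u s| :=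
    intervalIntegral.integral_const_mul _ _
  calc |‖(inner ℂ φ (ψ t) : ℂ)‖ - ‖(inner ℂ φ (ψ 0) : ℂ)‖|
      = |‖g t‖ - ‖g 0‖| := rfl
    _ = |‖h t‖ - ‖h 0‖| := step1
    _ ≤ ‖h t - h 0‖ := step2
    _ ≤ ∫ s in (0:ℝ)..t, ‖B φ‖ * |u s| := step3
    _ = ‖B φ‖ * ∫ s in (0:ℝ)..t, |u s| := step4
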